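/- Let A = kQ/<Z> with Q the crown of length n > 1 and Z = {a_0 γ^{m-1}} as above (γ = βa_0, β = a_{n-1}...a_1, m > 1). Then dim_k HH_1(A) = m if char k = p > 0 divides m, and dim_k HH_1(A) = m − 1 otherwise. -/

import Mathlib

/-!  Basic combinatorics of a quiver given by source/target maps `s t : A → V`.
A path of positive length is a list of arrows `[a₁, …, aₙ]` written in order of
traversal (so the written path `aₙ … a₁` of the paper corresponds to the list
`[a₁, …, aₙ]`).  -/

namespace Monomial

variable {V A : Type*}

/-- `l` is a path: consecutive arrows are composable. -/
def IsPath (s t : A → V) (l : List A) : Prop := l.Chain' fun a b => t a = s b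

/-- Source of a (nonempty) path. -/
def srcOf (s : A → V) (l : List A) : Option V := l.head?.map s

/-- Target of a (nonempty) path. -/
def tgtOf (t : A → V) (l : List A) : Option V := l.getLast?.map t

/-- `l` is a nontrivial cycle. -/
def IsCycleList (s t : A → V) (l : List A) : Prop :=
  l ≠ [] ∧ IsPath s t l ∧ tgtOf t l = srcOf s l

/-- `Z` is a minimal set of path relations of length at least two. -/
def MinimalRels (s t : A → V) (Z : Set (List A)) : Prop :=
  ∀ z ∈ Z, IsPath s t z ∧ 2 ≤ z.length ∧ ∀ w ∈ Z, w <:+: z → w = z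

/-- `l` belongs to `B`: it is a path containing no subpath from `Z`
(the basis of the monomial algebra, positive length part). -/
def InB (s t : A → V) (Z : Set (List A)) (l : List A) : Prop :=
  IsPath s t l ∧ ∀ z ∈ Z, ¬ z <:+: l

/-- `(a, β)` is a cyclic pair in `Q₁ ⊙ B` (if `β = []` it stands for the
trivial path at `s a = t a`). -/
def PairOK (s t : A → V) (Z : Set (List A)) (p : A × List A) : Prop :=
  InB s t Z p.2 ∧ IsCycleList s t (p.2 ++ [p.1])

/-- The set `W` of cycles containing precisely one subpath from `Z`,
located at their end (for a written cycle `γ = ξα`, the list is `α ++ ξ`). -/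
def InW (s t : A → V) (Z : Set (List A)) (l : List A) : Prop :=
  IsCycleList s t l ∧
    ∃ ξ ∈ Z, (∃ α, l = α ++ ξ) ∧ ∀ z ∈ Z, ∀ p q, l = p ++ z ++ q → z = ξ ∧ q = []

/-- Two cycles are in the same circuit iff they are related by rotation. -/
def RotEquiv (l₁ l₂ : List A) : Prop := ∃ n, l₁.rotate n = l₂

end Monomial

namespace Monomial

open Finsupp Classical




variable {V A : Type*} {k : Type*} [Field k]

/-- The basis vector of `k(Q₁ ⊙ B)` given by an arrow of a cycle `l` together
with its complement: for the cycle `l = [a₁, …, aₙ]` and index `j`,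
this is the pair `(a_{j+1}, a_{j+1}^{co})`, where `a_{j+1}^{co}` is the
complementary path of the arrow `a_{j+1}` in the cycle; by convention it is `0`
when the complement is not in `B`. -/
noncomputable def bAt (s t : A → V) (Z : Set (List A)) (k : Type*) [Field k]
    (l : List A) (j : ℕ) : (A × List A) →₀ k :=
  match (l.rotate (j + 1)).getLast? with
  | none => 0
  | Option.some a =>
      if InB s t Z ((l.rotate (j + 1)).dropLast) then
        Finsupp.single (a, (l.rotate (j + 1)).dropLast) 1
      else 0

/-- The canonical element `K_C = Σᵢ (aᵢ, aᵢ^{co})` attached to a cycle `γ`. -/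
noncomputable def KElt (s t : A → V) (Z : Set (List A)) (k : Type*) [Field k]
    (γ : List A) : (A × List A) →₀ k :=
  ∑ j ∈ Finset.range γ.length, bAt s t Z k γ j

/-- Value of the differential `d₀` on a basis element `(a, β)`:
`d₀(a,β) = (t a, aβ) − (s a, βa)`, where summands whose second component is a
zero path are interpreted as `0` (the vertex component is determined by the
cycle, so is omitted). -/
noncomputable def d0b (s t : A → V) (Z : Set (List A)) (k : Type*) [Field k]
    (p : A × List A) : List A →₀ k :=
  (if InB s t Z (p.2 ++ [p.1]) then Finsupp.single (p.2 ++ [p.1]) (1 : k) else 0)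
    - (if InB s t Z (p.1 :: p.2) then Finsupp.single (p.1 :: p.2) (1 : k) else 0)

/-- The differential `d₀ : k(Q₁ ⊙ B) → k(Q₀ ⊙ B)`. -/
noncomputable def d0map (s t : A → V) (Z : Set (List A)) {k : Type*} [Field k]
    (f : (A × List A) →₀ k) : List A →₀ k :=
  f.sum fun p c => c • d0b s t Z k p

/-- Value of the differential `d₁` on a basis element `(α, β) ∈ Z ⊙ B`:
for `α = aₙ … a₁` this is `Σᵢ (aᵢ, a_{i-1} … a₁ β aₙ … a_{i+1})`,
with summands whose second component is a zero path interpreted as `0`. -/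
noncomputable def d1b (s t : A → V) (Z : Set (List A)) (k : Type*) [Field k]
    (α β : List A) : (A × List A) →₀ k :=
  ∑ j ∈ Finset.range α.length, bAt s t Z k (β ++ α) (β.length + j)

/-- The differential `d₁ : k(Z ⊙ B) → k(Q₁ ⊙ B)`. -/
noncomputable def d1map (s t : A → V) (Z : Set (List A)) {k : Type*} [Field k]
    (g : (List A × List A) →₀ k) : (A × List A) →₀ k :=
  g.sum fun q c => c • d1b s t Z k q.1 q.2

/-- `(α, β)` is a cyclic pair in `Z ⊙ B`. -/
def ZPairOK (s t : A → V) (Z : Set (List A)) (q : List A × List A) : Prop :=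
  q.1 ∈ Z ∧ InB s t Z q.2 ∧ IsCycleList s t (q.2 ++ q.1)

end Monomial

namespace CrownHH1
open Monomial

def P (n : ℕ) (v : ZMod n) (ℓ : ℕ) : List (ZMod n) := (List.range ℓ).map fun i => v + (i : ℕ)

@[simp] lemma length_P (n : ℕ) (v : ZMod n) (ℓ : ℕ) : (P n v ℓ).length = ℓ := by simp [P]

@[simp] lemma P_zero (n : ℕ) (v : ZMod n) : P n v 0 = [] := by simp [P]

@[simp] lemma P_one (n : ℕ) (v : ZMod n) : P n v 1 = [v] := by
  simp [P, List.range_succ]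

lemma P_append (n : ℕ) (v : ZMod n) (a b : ℕ) :
    P n v (a + b) = P n v a ++ P n (v + a) b := by
  simp only [P, List.range_add, List.map_append, List.map_map]
  congr 1
  apply List.map_congr_left
  intro i _
  simp only [Function.comp]
  push_cast
  ring

lemma P_concat (n : ℕ) (v : ZMod n) (ℓ : ℕ) :
    P n v (ℓ + 1) = P n v ℓ ++ [v + ℓ] := by
  rw [P_append n v ℓ 1, P_one]

@[simp] lemma P_getElem (n : ℕ) (v : ZMod n) (ℓ i : ℕ) (h : i < ℓ) :
    (P n v ℓ)[i]'(by simpa using h) = v + i := by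
  simp [P]

@[simp] lemma P_head? (n : ℕ) (v : ZMod n) (ℓ : ℕ) (h : 0 < ℓ) :
    (P n v ℓ).head? = some v := by
  obtain ⟨ℓ', rfl⟩ : ∃ ℓ', ℓ = ℓ' + 1 := ⟨ℓ - 1, by omega⟩
  rw [show ℓ' + 1 = 1 + ℓ' from by omega, P_append, P_one]
  simp

lemma P_ne_nil (n : ℕ) (v : ZMod n) (ℓ : ℕ) (h : 0 < ℓ) : P n v ℓ ≠ [] := by
  intro hc
  have := congrArg List.length hc
  simp at this; omega

lemma P_getLast? (n : ℕ) (v : ZMod n) (ℓ : ℕ) (h : 0 < ℓ) :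
    (P n v ℓ).getLast? = some (v + (ℓ - 1 : ℕ)) := by
  obtain ⟨ℓ', rfl⟩ : ∃ ℓ', ℓ = ℓ' + 1 := ⟨ℓ - 1, by omega⟩
  rw [P_concat]
  simp

lemma P_drop (n : ℕ) (v : ZMod n) (ℓ j : ℕ) (h : j ≤ ℓ) :
    (P n v ℓ).drop j = P n (v + j) (ℓ - j) := by
  have hdl := List.drop_left (l₁ := P n v j) (l₂ := P n (v + j) (ℓ - j))
  rw [length_P] at hdl
  conv_lhs => rw [show ℓ = j + (ℓ - j) from by omega, P_append]
  exact hdl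

lemma P_take (n : ℕ) (v : ZMod n) (ℓ j : ℕ) (h : j ≤ ℓ) :
    (P n v ℓ).take j = P n v j := by
  have hdl := List.take_left (l₁ := P n v j) (l₂ := P n (v + j) (ℓ - j))
  rw [length_P] at hdl
  conv_lhs => rw [show ℓ = j + (ℓ - j) from by omega, P_append]
  exact hdl

lemma P_inj_head (n : ℕ) (v w : ZMod n) (ℓ ℓ' : ℕ) (h : P n v ℓ = P n w ℓ')
    (h0 : 0 < ℓ) : ℓ = ℓ' ∧ v = w := by
  have hl : ℓ = ℓ' := by
    have := congrArg List.length h; simpa using this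
  subst hl
  have := congrArg List.head? h
  rw [P_head? n v ℓ h0, P_head? n w ℓ h0] at this
  exact ⟨rfl, by simpa using this⟩

section ST
variable {n : ℕ}

def sQ : ZMod n → ZMod n := id
def tQ : ZMod n → ZMod n := fun i => i + 1

lemma isPath_P (v : ZMod n) (ℓ : ℕ) : IsPath sQ tQ (P n v ℓ) := by
  unfold IsPath List.Chain'; rw [List.isChain_iff_getElem]
  intro i h
  simp only [length_P] at h
  have h1 : i < ℓ := by omega
  have h2 : i + 1 < ℓ := by omega
  simp only [List.get_eq_getElem, P_getElem n v ℓ i h1, P_getElem n v ℓ (i+1) h2, tQ, sQ, id]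
  push_cast
  ring

lemma path_eq_P : ∀ (l' : List (ZMod n)) (v : ZMod n), IsPath sQ tQ (v :: l') →
    v :: l' = P n v (l'.length + 1) := by
  intro l'
  induction l' with
  | nil => intro v _; simp
  | cons w l'' ih =>
    intro v h
    unfold IsPath List.Chain' at h; rw [List.isChain_cons_cons] at h
    obtain ⟨h1, h2⟩ := h
    have hw : w = v + 1 := by simpa [tQ, sQ] using h1.symm
    subst hw
    show v :: (v + 1) :: l'' = P n v (l''.length + 1 + 1)
    rw [show l''.length + 1 + 1 = 1 + (l''.length + 1) from by omega, P_append, P_one]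
    have := ih (v + 1) h2
    rw [List.singleton_append, Nat.cast_one, ← this]

lemma cast_pred (ℓ : ℕ) (h : 0 < ℓ) : ((ℓ - 1 : ℕ) : ZMod n) = (ℓ : ℕ) - 1 := by
  push_cast [Nat.cast_sub (by omega : 1 ≤ ℓ)]
  ring

lemma isCycle_P (v : ZMod n) (ℓ : ℕ) :
    IsCycleList sQ tQ (P n v ℓ) ↔ 0 < ℓ ∧ (ℓ : ZMod n) = 0 := by
  constructor
  · rintro ⟨h1, _, h3⟩
    have h0 : 0 < ℓ := by
      rcases Nat.eq_zero_or_pos ℓ with h | h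
      · subst h; simp at h1
      · exact h
    refine ⟨h0, ?_⟩
    rw [tgtOf, srcOf, P_getLast? n v ℓ h0, P_head? n v ℓ h0] at h3
    simp only [Option.map_some, tQ, sQ, id, Option.some_inj] at h3
    have hc := cast_pred (n := n) ℓ h0
    linear_combination h3 - hc
  · rintro ⟨h0, hz⟩
    refine ⟨P_ne_nil n v ℓ h0, isPath_P v ℓ, ?_⟩
    rw [tgtOf, srcOf, P_getLast? n v ℓ h0, P_head? n v ℓ h0]
    simp only [Option.map_some, tQ, sQ, id, Option.some_inj]
    have hc := cast_pred (n := n) ℓ h0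
    linear_combination hc + hz

lemma infix_P_iff (z : List (ZMod n)) (v : ZMod n) (ℓ : ℕ) :
    z <:+: P n v ℓ ↔ ∃ j, j + z.length ≤ ℓ ∧ z = P n (v + j) z.length := by
  constructor
  · rintro ⟨u, w, h⟩
    refine ⟨u.length, ?_, ?_⟩
    · have := congrArg List.length h
      simp at this; omega
    · have hlen : u.length + z.length ≤ ℓ := by
        have := congrArg List.length h; simp at this; omega
      have hd : (P n v ℓ).drop u.length = z ++ w := by
        rw [← h, List.append_assoc, List.drop_left]
      have ht : ((P n v ℓ).drop u.length).take z.length = z := by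
        rw [hd, List.take_left]
      rw [P_drop n v ℓ u.length (by omega), P_take _ _ _ _ (by omega)] at ht
      exact ht.symm
  · rintro ⟨j, hj, hz⟩
    have hcast : (v + ((j + z.length : ℕ) : ZMod n)) = v + (j : ℕ) + (z.length : ℕ) := by
      push_cast; ring
    have key : P n v ℓ = P n v j ++ (z ++ P n (v + ((j + z.length : ℕ) : ℕ)) (ℓ - (j + z.length))) := by
      conv_lhs => rw [show ℓ = j + (z.length + (ℓ - (j + z.length))) from by omega, P_append,
        P_append]
      rw [← hz, hcast]
    exact ⟨_, _, by rw [List.append_assoc]; exact key.symm⟩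

end ST
section Crown
variable {n m : ℕ}

/-- the length of the relation -/
def Lrel (n m : ℕ) : ℕ := n * (m - 1) + 1

/-- the relation `a₀ γ^{m-1}` as a list -/
def zrel (n m : ℕ) : List (ZMod n) := P n 0 (Lrel n m)

/-- the relation set -/
def Zn (n m : ℕ) : Set (List (ZMod n)) := {zrel n m}

lemma val_neg_le (hn : 0 < n) (v : ZMod n) : (-v).val < n := by
  haveI : NeZero n := ⟨by omega⟩
  exact ZMod.val_lt _

lemma exists_j_iff (hn : 0 < n) (v : ZMod n) (L ℓ : ℕ) :
    (∃ j : ℕ, j + L ≤ ℓ ∧ v + (j : ℕ) = 0) ↔ (-v).val + L ≤ ℓ := by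
  haveI : NeZero n := ⟨by omega⟩
  constructor
  · rintro ⟨j, hj, hv⟩
    have h1 : ((j : ℕ) : ZMod n) = -v := by linear_combination hv
    have h2 : (-v).val = j % n := by rw [← h1, ZMod.val_natCast]
    have := Nat.mod_le j n
    omega
  · intro h
    refine ⟨(-v).val, h, ?_⟩
    have h1 : (((-v).val : ℕ) : ZMod n) = -v := ZMod.natCast_rightInverse (-v)
    rw [h1]; ring

lemma InB_P_iff (hn : 0 < n) (v : ZMod n) (ℓ : ℕ) :
    InB sQ tQ (Zn n m) (P n v ℓ) ↔ ℓ < Lrel n m + (-v).val := by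
  have hL : 0 < Lrel n m := by simp [Lrel]
  rw [InB]
  simp only [Zn, Set.mem_singleton_iff, forall_eq]
  rw [infix_P_iff]
  constructor
  · rintro ⟨-, h⟩
    by_contra hc
    push_neg at hc
    apply h
    obtain ⟨j, hj1, hj2⟩ := (exists_j_iff hn v (Lrel n m) ℓ).mpr (by omega)
    refine ⟨j, ?_, ?_⟩
    · simpa [zrel] using hj1
    · have : (0 : ZMod n) = v + (j : ℕ) := hj2.symm
      rw [zrel]
      simp only [length_P]
      rw [this]
  · intro h
    refine ⟨isPath_P v ℓ, ?_⟩
    rintro ⟨j, hj1, hj2⟩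
    simp only [zrel, length_P] at hj1 hj2
    have h0 : v + (j : ℕ) = 0 := by
      have := (P_inj_head n 0 (v + (j : ℕ)) (Lrel n m) (Lrel n m) hj2 hL).2
      exact this.symm
    have := (exists_j_iff hn v (Lrel n m) ℓ).mp ⟨j, hj1, h0⟩
    omega

lemma InB_cycle_iff (hn : 1 < n) (hm : 1 < m) (v : ZMod n) (q : ℕ) (hq : 0 < q) :
    InB sQ tQ (Zn n m) (P n v (q * n)) ↔ q ≤ m - 1 := by
  rw [InB_P_iff (by omega) v]
  have hval := val_neg_le (by omega : 0 < n) v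
  simp only [Lrel]
  constructor
  · intro h
    by_contra hc
    push_neg at hc
    have h5 : m * n ≤ q * n := Nat.mul_le_mul_right n (by omega)
    have hmn : m * n = n * (m - 1) + n := by
      calc m * n = ((m - 1) + 1) * n := by rw [show (m - 1) + 1 = m from by omega]
      _ = n * (m - 1) + n := by ring
    omega
  · intro h
    have : q * n ≤ (m - 1) * n := Nat.mul_le_mul_right n h
    have : (m - 1) * n = n * (m - 1) := Nat.mul_comm _ _
    omega

lemma val_neg_eq_iff (hn : 1 < n) (v : ZMod n) : (-v).val = n - 1 ↔ v = 1 := by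
  haveI : NeZero n := ⟨by omega⟩
  have h2 : ((n - 1 : ℕ) : ZMod n) = -1 := by
    have : ((n - 1 : ℕ) : ZMod n) + 1 = ((n : ℕ) : ZMod n) := by
      push_cast [Nat.cast_sub (by omega : 1 ≤ n)]; ring
    rw [ZMod.natCast_self] at this
    linear_combination this
  constructor
  · intro h
    have h1 : ((n - 1 : ℕ) : ZMod n) = -v := by rw [← h]; exact ZMod.natCast_rightInverse (-v)
    linear_combination h1 - h2
  · rintro rfl
    rw [show (-1 : ZMod n) = ((n - 1 : ℕ) : ZMod n) from h2.symm, ZMod.val_natCast,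
      Nat.mod_eq_of_lt (by omega)]

lemma InB_path_iff (hn : 1 < n) (hm : 1 < m) (v : ZMod n) (q : ℕ) (hq : 0 < q) :
    InB sQ tQ (Zn n m) (P n v (q * n - 1)) ↔ q ≤ m - 1 ∨ (q = m ∧ v = 1) := by
  rw [InB_P_iff (by omega) v]
  have hval := val_neg_le (by omega : 0 < n) v
  have hvn := (val_neg_eq_iff hn v)
  simp only [Lrel]
  have hmn : m * n = n * (m - 1) + n := by
    calc m * n = ((m - 1) + 1) * n := by rw [show (m - 1) + 1 = m from by omega]
    _ = n * (m - 1) + n := by ring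
  rcases Nat.lt_trichotomy q m with h | rfl | h
  · have h3 : q * n ≤ (m - 1) * n := Nat.mul_le_mul_right n (by omega)
    have h4 : (m - 1) * n = n * (m - 1) := Nat.mul_comm _ _
    constructor
    · intro _; left; omega
    · intro _; omega
  · constructor
    · intro hlt
      right
      refine ⟨rfl, hvn.mp ?_⟩
      omega
    · rintro (h | ⟨-, hv⟩)
      · omega
      · have := hvn.mpr hv
        omega
  · have h3 : (m + 1) * n ≤ q * n := Nat.mul_le_mul_right n (by omega)
    have h4 : (m + 1) * n = n * (m - 1) + n + n := by
      calc (m + 1) * n = ((m - 1) + 2) * n := by rw [show (m - 1) + 2 = m + 1 from by omega]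
      _ = n * (m - 1) + n + n := by ring
    constructor
    · intro hlt; omega
    · rintro (h1 | ⟨h1, -⟩) <;> omega

end Crown
section Crown2
variable {n m : ℕ} {k : Type*} [Field k]

lemma cast_mul_self (q : ℕ) : ((q * n : ℕ) : ZMod n) = 0 := by
  push_cast [ZMod.natCast_self]; ring

lemma cast_mul_self_pred (q : ℕ) (hq : 0 < q) (hn : 0 < n) :
    ((q * n - 1 : ℕ) : ZMod n) = -1 := by
  have h := cast_pred (n := n) (q * n) (by positivity)
  rw [h, cast_mul_self]; ring

lemma one_ne_zero' (hn : 1 < n) : (1 : ZMod n) ≠ 0 := by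
  intro h
  have : ((1 : ℕ) : ZMod n) = 0 := by exact_mod_cast h
  rw [ZMod.natCast_eq_zero_iff] at this
  have := Nat.le_of_dvd one_pos this
  omega

/-- the cyclic pair attached to `q` and `a` -/
def pQ (n : ℕ) (q : ℕ) (a : ZMod n) : ZMod n × List (ZMod n) := (a, P n (a + 1) (q * n - 1))

lemma pairOK_iff (hn : 1 < n) (hm : 1 < m) (p : ZMod n × List (ZMod n)) :
    PairOK sQ tQ (Zn n m) p ↔
      ∃ q, 0 < q ∧ (q ≤ m - 1 ∨ (q = m ∧ p.1 = 0)) ∧ p = pQ n q p.1 := by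
  obtain ⟨a, β⟩ := p
  constructor
  · rintro ⟨hB, hcyc⟩
    match β, hB with
    | [], hB =>
      exfalso
      have h1 : ([] : List (ZMod n)) ++ [a] = P n a 1 := by simp
      rw [h1, isCycle_P] at hcyc
      exact one_ne_zero' hn (by exact_mod_cast hcyc.2)
    | v :: l', hB =>
      have hpath : IsPath sQ tQ ((v :: l') ++ [a]) := hcyc.2.1
      rw [List.cons_append] at hpath
      have heq : v :: (l' ++ [a]) = P n v ((l' ++ [a]).length + 1) := path_eq_P _ v hpath
      rw [List.length_append, List.length_singleton] at heq
      set ℓ := l'.length with hℓ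
      have heqβ : v :: l' = P n v (ℓ + 1) := path_eq_P _ v hB.1
      rw [List.cons_append, heq] at hcyc
      rw [isCycle_P] at hcyc
      obtain ⟨-, hdvd⟩ := hcyc
      rw [ZMod.natCast_eq_zero_iff] at hdvd
      obtain ⟨q, hqn⟩ := hdvd
      have hq : 0 < q := by
        rcases Nat.eq_zero_or_pos q with h | h
        · rw [h, Nat.mul_zero] at hqn; omega
        · exact h
      have hnq : ℓ + 1 + 1 = q * n := by rw [hqn, Nat.mul_comm]
      -- identify a
      have hlast : a = v + ((ℓ + 1 : ℕ) : ZMod n) := by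
        have h2 := congrArg List.getLast? heq
        rw [← List.cons_append, List.getLast?_concat,
          P_getLast? n v (ℓ + 1 + 1) (by omega)] at h2
        simpa using h2
      have hcast : ((ℓ + 1 : ℕ) : ZMod n) = -1 := by
        have : ((ℓ + 1 + 1 : ℕ) : ZMod n) = 0 := by
          rw [hnq]; exact cast_mul_self q
        push_cast at this ⊢
        linear_combination this
      have hv : v = a + 1 := by
        rw [hlast, hcast]; ring
      refine ⟨q, hq, ?_, ?_⟩
      · have hBiff := InB_path_iff (n := n) (m := m) hn hm v q hq
        rw [show q * n - 1 = ℓ + 1 from by omega, ← heqβ] at hBiff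
        rcases hBiff.mp hB with h | ⟨h1, h2⟩
        · exact Or.inl h
        · right
          refine ⟨h1, ?_⟩
          have : a + 1 = 1 := by rw [← hv, h2]
          linear_combination this
      · show (a, v :: l') = (a, P n (a + 1) (q * n - 1))
        rw [heqβ, hv, show q * n - 1 = ℓ + 1 from by omega]
  · rintro ⟨q, hq, hcond, heq⟩
    have hcond' : q ≤ m - 1 ∨ (q = m ∧ a = 0) := hcond
    have hp : (a, β) = (a, P n (a + 1) (q * n - 1)) := heq
    rw [Prod.mk.injEq] at hp
    obtain ⟨-, rfl⟩ := hp
    constructor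
    · show InB sQ tQ (Zn n m) (P n (a + 1) (q * n - 1))
      rw [InB_path_iff hn hm _ q hq]
      rcases hcond' with h | ⟨h1, h2⟩
      · exact Or.inl h
      · exact Or.inr ⟨h1, by rw [h2]; ring⟩
    · show IsCycleList sQ tQ (P n (a + 1) (q * n - 1) ++ [a])
      have h1 : P n (a + 1) (q * n - 1) ++ [a] = P n (a + 1) (q * n) := by
        rw [show q * n = (q * n - 1) + 1 from by
          have : 0 < q * n := by positivity
          omega, P_concat]
        congr 2
        rw [cast_mul_self_pred q hq (by omega)]
        ring
      rw [h1, isCycle_P]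
      exact ⟨by positivity, cast_mul_self q⟩

lemma path_append_P (v w : ZMod n) (a b : ℕ) (ha : 0 < a) (hb : 0 < b)
    (h : IsPath sQ tQ (P n v a ++ P n w b)) : w = v + (a : ℕ) := by
  have hne : P n v a ++ P n w b ≠ [] := by
    intro hc
    rw [List.append_eq_nil_iff] at hc
    exact P_ne_nil n v a ha hc.1
  match hmm : P n v a ++ P n w b, h with
  | [], _ => exact absurd hmm hne
  | x :: l', h =>
    have heq : x :: l' = P n x (l'.length + 1) := path_eq_P _ x h
    have hx : x = v := by
      have := congrArg List.head? hmm.symm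
      rw [List.head?_append_of_ne_nil] at this
      · rw [P_head? n v a ha] at this
        simpa using this
      · exact P_ne_nil n v a ha
    have hlen : l'.length + 1 = a + b := by
      have := congrArg List.length hmm.symm
      simpa using this
    have hfull : P n v a ++ P n w b = P n v (a + b) := by
      rw [hmm, heq, hx, hlen]
    rw [P_append] at hfull
    have := List.append_inj_right hfull (by simp)
    exact (P_inj_head n w (v + (a : ℕ)) b b this hb).2

lemma zPairOK_iff (hn : 1 < n) (hm : 1 < m) (p : List (ZMod n) × List (ZMod n)) :
    ZPairOK sQ tQ (Zn n m) p ↔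
      ∃ c, 0 < c ∧ c ≤ m ∧ p = (zrel n m, P n 1 (c * n - 1)) := by
  have hL : Lrel n m = n * (m - 1) + 1 := rfl
  have hLpos : 0 < Lrel n m := by omega
  obtain ⟨α, β⟩ := p
  constructor
  · rintro ⟨hZ, hB, hcyc⟩
    have hα : α = zrel n m := hZ
    subst hα
    match β, hB with
    | [], hB =>
      exfalso
      rw [List.nil_append, zrel, isCycle_P, ZMod.natCast_eq_zero_iff] at hcyc
      have h2 : n ∣ n * (m - 1) := dvd_mul_right n (m - 1)
      have h3 : n ∣ 1 := (Nat.dvd_add_right h2).mp (by rw [hL] at hcyc; exact hcyc.2)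
      have := Nat.le_of_dvd one_pos h3
      omega
    | v :: l', hB =>
      have heqβ : v :: l' = P n v (l'.length + 1) := path_eq_P _ v hB.1
      set ℓ := l'.length + 1 with hℓ
      have hjunction : (0 : ZMod n) = v + (ℓ : ℕ) := by
        apply path_append_P v 0 ℓ (Lrel n m) (by omega) hLpos
        rw [← heqβ]
        exact hcyc.2.1
      have hfull : (v :: l') ++ zrel n m = P n v (ℓ + Lrel n m) := by
        rw [heqβ, zrel]
        conv_rhs => rw [P_append]
        rw [← hjunction]
      rw [hfull, isCycle_P, ZMod.natCast_eq_zero_iff] at hcyc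
      obtain ⟨-, tt, htt⟩ := hcyc
      have hcomm : n * tt = tt * n := Nat.mul_comm _ _
      have httpos : m - 1 < tt := by
        by_contra hc
        push_neg at hc
        have h4 : tt * n ≤ (m - 1) * n := Nat.mul_le_mul_right n hc
        have h5 : (m - 1) * n = n * (m - 1) := Nat.mul_comm _ _
        omega
      refine ⟨tt - (m - 1), by omega, ?_, ?_⟩
      · -- c ≤ m from InB
        have hc1 : ℓ = (tt - (m - 1)) * n - 1 := by
          have h1 : (tt - (m - 1)) * n = tt * n - (m - 1) * n := by
            rw [Nat.sub_mul]
          have h2 : (m - 1) * n = n * (m - 1) := Nat.mul_comm _ _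
          omega
        have hv : v = 1 := by
          have hcast : ((ℓ : ℕ) : ZMod n) = -1 := by
            have h0 : ((ℓ + Lrel n m : ℕ) : ZMod n) = 0 := by
              rw [htt]; rw [show n * tt = tt * n from Nat.mul_comm _ _]; exact cast_mul_self tt
            have h1 : ((Lrel n m : ℕ) : ZMod n) = 1 := by
              rw [hL]; push_cast [ZMod.natCast_self]; ring
            push_cast at h0
            rw [h1] at h0
            rw [hℓ]
            push_cast
            linear_combination h0 - (by simp [hℓ] : (ℓ : ZMod n) = l'.length + 1)
          have := hjunction
          rw [hcast] at this
          linear_combination -this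
        have hBiff := InB_path_iff (n := n) (m := m) hn hm v (tt - (m - 1)) (by omega)
        rw [← hc1, ← heqβ] at hBiff
        rcases hBiff.mp hB with h | ⟨h1, -⟩
        · omega
        · omega
      · -- identify the list
        have hc1 : ℓ = (tt - (m - 1)) * n - 1 := by
          have h1 : (tt - (m - 1)) * n = tt * n - (m - 1) * n := by
            rw [Nat.sub_mul]
          have h2 : (m - 1) * n = n * (m - 1) := Nat.mul_comm _ _
          omega
        have hv : v = 1 := by
          have hcast : ((ℓ : ℕ) : ZMod n) = -1 := by
            have h0 : ((ℓ + Lrel n m : ℕ) : ZMod n) = 0 := by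
              rw [htt]; rw [show n * tt = tt * n from Nat.mul_comm _ _]; exact cast_mul_self tt
            have h1 : ((Lrel n m : ℕ) : ZMod n) = 1 := by
              rw [hL]; push_cast [ZMod.natCast_self]; ring
            push_cast at h0
            rw [h1] at h0
            rw [hℓ]
            push_cast
            linear_combination h0 - (by simp [hℓ] : (ℓ : ZMod n) = l'.length + 1)
          have := hjunction
          rw [hcast] at this
          linear_combination -this
        rw [Prod.mk.injEq]
        exact ⟨rfl, by rw [heqβ, hv, ← hc1]⟩
  · rintro ⟨c, hc, hcm, heq⟩
    rw [Prod.mk.injEq] at heq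
    obtain ⟨h1, h2⟩ := heq
    subst h1; subst h2
    refine ⟨rfl, ?_, ?_⟩
    · rw [InB_path_iff hn hm 1 c hc]
      rcases Nat.lt_or_ge c m with h | h
      · exact Or.inl (by omega)
      · exact Or.inr ⟨by omega, rfl⟩
    · have hfull : P n 1 (c * n - 1) ++ zrel n m = P n 1 (c * n - 1 + Lrel n m) := by
        rw [zrel, P_append]
        congr 1
        rw [cast_mul_self_pred c hc (by omega)]
        ring
      rw [hfull, isCycle_P, ZMod.natCast_eq_zero_iff]
      constructor
      · omega
      · have hcn : 0 < c * n := by positivity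
        have : c * n - 1 + Lrel n m = n * (c + m - 1) := by
          rw [hL]
          have h1 : n * (c + m - 1) = n * c + n * (m - 1) := by
            rw [← Nat.mul_add]
            congr 1
            omega
          have h2 : n * c = c * n := Nat.mul_comm _ _
          omega
        rw [this]
        exact Dvd.intro _ rfl

lemma P_rotate (v : ZMod n) (N r : ℕ) (hN : ((N : ℕ) : ZMod n) = 0) (hr : r ≤ N) :
    (P n v N).rotate r = P n (v + (r : ℕ)) N := by
  rw [List.rotate_eq_drop_append_take (by simpa using hr), P_drop n v N r hr,
    P_take n v N r hr]
  have h1 : P n v r = P n (v + (r : ℕ) + ((N - r : ℕ) : ZMod n)) r := by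
    congr 1
    rw [Nat.cast_sub hr, hN]
    ring
  rw [h1, ← P_append]
  congr 1
  omega

end Crown2
section Crown3
open scoped Classical
variable {n m : ℕ} (k : Type*) [Field k]

lemma bAt_eq_of_getLast {V A : Type*} (s t : A → V) (Z : Set (List A)) (k : Type*)
    [Field k] (l : List A) (j : ℕ) (a : A) (h : (l.rotate (j + 1)).getLast? = some a) :
    bAt s t Z k l j = if InB s t Z ((l.rotate (j + 1)).dropLast) then
      Finsupp.single (a, (l.rotate (j + 1)).dropLast) 1 else 0 := by
  rw [bAt, h]

/-- computation of `bAt` on a standard cycle. -/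
lemma bAt_P (hn : 1 < n) (v : ZMod n) (N idx : ℕ)
    (hN : ((N : ℕ) : ZMod n) = 0) (hi : idx + 1 ≤ N) :
    bAt sQ tQ (Zn n m) k (P n v N) idx =
      if InB sQ tQ (Zn n m) (P n (v + (idx : ℕ) + 1) (N - 1)) then
        Finsupp.single ((v + (idx : ℕ), P n (v + (idx : ℕ) + 1) (N - 1))) (1 : k)
      else 0 := by
  have hrot : (P n v N).rotate (idx + 1) = P n (v + ((idx + 1 : ℕ) : ℕ)) N :=
    P_rotate v N (idx + 1) hN hi
  have hsplit : P n (v + ((idx + 1 : ℕ) : ℕ)) N =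
      P n (v + ((idx + 1 : ℕ) : ℕ)) (N - 1) ++ [v + ((idx + 1 : ℕ) : ℕ) + ((N - 1 : ℕ) : ZMod n)] := by
    conv_lhs => rw [show N = (N - 1) + 1 from by omega, P_concat]
  have hlast : ((P n v N).rotate (idx + 1)).getLast? = some (v + (idx : ℕ)) := by
    rw [hrot, hsplit, List.getLast?_concat]
    congr 1
    rw [cast_pred N (by omega), hN]
    push_cast
    ring
  rw [bAt_eq_of_getLast sQ tQ (Zn n m) k _ idx _ hlast, hrot, hsplit, List.dropLast_concat]
  have harg : v + ((idx + 1 : ℕ) : ZMod n) = v + (idx : ℕ) + 1 := by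
    push_cast; ring
  rw [harg]

/-- `d0b` vanishes on the exceptional pair `p_m`. -/
lemma d0b_pm (hn : 1 < n) (hm : 1 < m) :
    d0b sQ tQ (Zn n m) k (pQ n m 0) = 0 := by
  have hmn : 0 < m * n := by positivity
  rw [d0b, pQ]
  have h1 : P n (0 + 1) (m * n - 1) ++ [(0 : ZMod n)] = P n 1 (m * n) := by
    conv_rhs => rw [show m * n = (m * n - 1) + 1 from by omega, P_concat]
    rw [cast_mul_self_pred m (by omega) (by omega)]
    norm_num
  have h2 : (0 : ZMod n) :: P n (0 + 1) (m * n - 1) = P n 0 (m * n) := by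
    conv_rhs => rw [show m * n = 1 + (m * n - 1) from by omega, P_append, P_one]
    norm_num
  rw [h1, h2]
  rw [if_neg, if_neg, sub_zero]
  · rw [InB_cycle_iff hn hm 0 m (by omega)]; omega
  · rw [InB_cycle_iff hn hm 1 m (by omega)]; omega

/-- `d0b` on the regular pairs. -/
lemma d0b_pq (hn : 1 < n) (hm : 1 < m) (q : ℕ) (hq : 0 < q) (hqm : q ≤ m - 1) (a : ZMod n) :
    d0b sQ tQ (Zn n m) k (pQ n q a) =
      Finsupp.single (P n (a + 1) (q * n)) 1 - Finsupp.single (P n a (q * n)) 1 := by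
  have hqn : 0 < q * n := by positivity
  rw [d0b, pQ]
  have h1 : P n (a + 1) (q * n - 1) ++ [a] = P n (a + 1) (q * n) := by
    conv_rhs => rw [show q * n = (q * n - 1) + 1 from by omega, P_concat]
    rw [cast_mul_self_pred q (by omega) (by omega)]
    congr 2
    ring
  have h2 : a :: P n (a + 1) (q * n - 1) = P n a (q * n) := by
    conv_rhs => rw [show q * n = 1 + (q * n - 1) from by omega, P_append, P_one]
    norm_num
  rw [h1, h2]
  rw [if_pos, if_pos]
  · rw [InB_cycle_iff hn hm a q hq]; omega
  · rw [InB_cycle_iff hn hm (a + 1) q hq]; omega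

/-- key evaluation: the coefficient of a cycle in `d0b p`. -/
lemma d0b_apply (hn : 1 < n) (hm : 1 < m) (q : ℕ) (hq : 0 < q) (hqm : q ≤ m - 1)
    (v : ZMod n) (p : ZMod n × List (ZMod n)) :
    (d0b sQ tQ (Zn n m) k p) (P n v (q * n)) =
      (if p = pQ n q (v - 1) then 1 else 0) - (if p = pQ n q v then 1 else 0) := by
  have hqn : 1 < q * n := by
    have : 1 * 2 ≤ q * n := Nat.mul_le_mul hq hn
    omega
  rw [d0b, Finsupp.sub_apply]
  congr 1
  · -- first summand
    by_cases hp : p = pQ n q (v - 1)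
    · subst hp
      have h1 : (pQ n q (v - 1)).2 ++ [(pQ n q (v - 1)).1] = P n v (q * n) := by
        show P n (v - 1 + 1) (q * n - 1) ++ [v - 1] = P n v (q * n)
        conv_rhs => rw [show q * n = (q * n - 1) + 1 from by omega, P_concat]
        rw [cast_mul_self_pred q (by omega) (by omega)]
        congr 2 <;> ring
      rw [h1, if_pos, if_pos rfl]
      · rw [Finsupp.single_eq_same]
      · rw [InB_cycle_iff hn hm v q hq]; omega
    · rw [if_neg hp]
      by_cases hB : InB sQ tQ (Zn n m) (p.2 ++ [p.1])
      · rw [if_pos hB, Finsupp.single_apply, if_neg]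
        intro hc
        apply hp
        have hsp : P n v (q * n) = P n v (q * n - 1) ++ [v + ((q * n - 1 : ℕ) : ZMod n)] := by
          conv_lhs => rw [show q * n = (q * n - 1) + 1 from by omega, P_concat]
        rw [hsp] at hc
        have h2 := List.append_inj hc (by
          have := congrArg List.length hc
          simp at this
          simp [this])
        obtain ⟨hc2, hc1⟩ := h2
        have hc1' : p.1 = v + ((q * n - 1 : ℕ) : ZMod n) := by
          simpa using hc1
        rw [cast_mul_self_pred q (by omega) (by omega)] at hc1'
        have hfst : p.1 = v - 1 := by rw [hc1']; ring
        have hsnd : p.2 = P n (v - 1 + 1) (q * n - 1) := by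
          rw [hc2]; congr 1; ring
        rw [pQ]
        exact Prod.ext hfst hsnd
      · rw [if_neg hB, Finsupp.coe_zero, Pi.zero_apply]
  · -- second summand
    by_cases hp : p = pQ n q v
    · subst hp
      have h1 : (pQ n q v).1 :: (pQ n q v).2 = P n v (q * n) := by
        show v :: P n (v + 1) (q * n - 1) = P n v (q * n)
        conv_rhs => rw [show q * n = 1 + (q * n - 1) from by omega, P_append, P_one]
        norm_num
      rw [h1, if_pos, if_pos rfl]
      · rw [Finsupp.single_eq_same]
      · rw [InB_cycle_iff hn hm v q hq]; omega
    · rw [if_neg hp]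
      by_cases hB : InB sQ tQ (Zn n m) (p.1 :: p.2)
      · rw [if_pos hB, Finsupp.single_apply, if_neg]
        intro hc
        apply hp
        have hsp : P n v (q * n) = v :: P n (v + 1) (q * n - 1) := by
          conv_lhs => rw [show q * n = 1 + (q * n - 1) from by omega, P_append, P_one]
          norm_num
        rw [hsp, List.cons.injEq] at hc
        rw [pQ]
        exact Prod.ext hc.1 hc.2
      · rw [if_neg hB, Finsupp.coe_zero, Pi.zero_apply]

/-- `d1b` vanishes for `c ≥ 2`. -/
lemma d1b_zero (hn : 1 < n) (hm : 1 < m) (c : ℕ) (hc : 2 ≤ c) (hcm : c ≤ m) :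
    d1b sQ tQ (Zn n m) k (zrel n m) (P n 1 (c * n - 1)) = 0 := by
  rw [d1b]
  apply Finset.sum_eq_zero
  intro j hj
  rw [Finset.mem_range] at hj
  have hL : (zrel n m).length = Lrel n m := by rw [zrel, length_P]
  rw [hL] at hj
  have hβ : (P n 1 (c * n - 1)).length = c * n - 1 := length_P _ _ _
  set N := c * n - 1 + Lrel n m with hN
  have hNval : N = (c + m - 1) * n := by
    have h1 : (c + m - 1) * n = c * n + (m - 1) * n := by
      rw [show c + m - 1 = c + (m - 1) from by omega, Nat.add_mul]
    have h2 : (m - 1) * n = n * (m - 1) := Nat.mul_comm _ _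
    have h3 : 0 < c * n := by positivity
    rw [hN, Lrel]
    omega
  have hfull : P n 1 (c * n - 1) ++ zrel n m = P n 1 N := by
    rw [zrel, hN, P_append]
    congr 1
    rw [cast_mul_self_pred c (by omega) (by omega)]
    ring
  rw [hfull, hβ]
  have hidx : c * n - 1 + j + 1 ≤ N := by omega
  rw [bAt_P k hn 1 N (c * n - 1 + j) (by rw [hNval]; exact cast_mul_self _) hidx]
  rw [if_neg]
  have hN1 : N - 1 = (c + m - 1) * n - 1 := by rw [hNval]
  rw [hN1, InB_path_iff hn hm _ (c + m - 1) (by omega)]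
  push_neg
  constructor
  · omega
  · intro h
    omega

/-- `d1b` in the crucial case `c = 1`: it equals `m • e_{p_m}`. -/
lemma d1b_one (hn : 1 < n) (hm : 1 < m) :
    d1b sQ tQ (Zn n m) k (zrel n m) (P n 1 (1 * n - 1)) =
      (m : k) • Finsupp.single (pQ n m 0) 1 := by
  rw [d1b]
  have hL : (zrel n m).length = Lrel n m := by rw [zrel, length_P]
  have hβ : (P n 1 (1 * n - 1)).length = n - 1 := by rw [length_P, Nat.one_mul]
  set N := n * m with hN
  have hNsum : n - 1 + Lrel n m = N := by
    have : n * m = n * (m - 1) + n := by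
      calc n * m = n * ((m - 1) + 1) := by rw [show (m - 1) + 1 = m from by omega]
      _ = n * (m - 1) + n := by ring
    rw [Lrel, hN]
    omega
  have hNn : N = n * (m - 1) + n := by
    rw [hN]
    calc n * m = n * ((m - 1) + 1) := by rw [show (m - 1) + 1 = m from by omega]
    _ = n * (m - 1) + n := by ring
  have hfull : P n 1 (1 * n - 1) ++ zrel n m = P n 1 N := by
    rw [zrel, ← hNsum, Nat.one_mul, P_append]
    congr 1
    rw [cast_pred n (by omega), ZMod.natCast_self]
    ring
  have hNcast : ((N : ℕ) : ZMod n) = 0 := by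
    rw [hN]; push_cast [ZMod.natCast_self]; ring
  have key : ∀ j ∈ Finset.range (Lrel n m),
      bAt sQ tQ (Zn n m) k (P n 1 N) (n - 1 + j) =
        if (n : ℕ) ∣ j then Finsupp.single (pQ n m 0) 1 else 0 := by
    intro j hj
    rw [Finset.mem_range, Lrel] at hj
    have hidx : n - 1 + j + 1 ≤ N := by omega
    rw [bAt_P k hn 1 N (n - 1 + j) hNcast hidx]
    have hv1 : (1 : ZMod n) + ((n - 1 + j : ℕ) : ZMod n) + 1 = 1 + (j : ℕ) := by
      push_cast [Nat.cast_sub (by omega : 1 ≤ n), ZMod.natCast_self]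
      ring
    have hv0 : (1 : ZMod n) + ((n - 1 + j : ℕ) : ZMod n) = (j : ℕ) := by
      push_cast [Nat.cast_sub (by omega : 1 ≤ n), ZMod.natCast_self]
      ring
    rw [hv1, hv0]
    have hN1 : N - 1 = m * n - 1 := by rw [hN, Nat.mul_comm]
    by_cases hdvd : (n : ℕ) ∣ j
    · have hj0 : ((j : ℕ) : ZMod n) = 0 := by
        rw [ZMod.natCast_eq_zero_iff]; exact hdvd
      rw [if_pos hdvd, if_pos]
      · rw [pQ, hj0, hN1]
        norm_num
      · rw [hN1, InB_path_iff hn hm _ m (by omega), hj0]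
        right
        constructor
        · rfl
        · norm_num
    · have hj0 : ((j : ℕ) : ZMod n) ≠ 0 := fun h =>
        hdvd ((ZMod.natCast_eq_zero_iff j n).mp h)
      rw [if_neg hdvd, if_neg]
      rw [hN1, InB_path_iff hn hm _ m (by omega)]
      push_neg
      refine ⟨by omega, fun _hm2 hc => hj0 (by linear_combination hc)⟩
  rw [hfull, hβ, hL]
  rw [Finset.sum_congr rfl key]
  rw [Finset.sum_ite, Finset.sum_const_zero, add_zero, Finset.sum_const]
  have hcard : (Finset.filter (fun j => (n : ℕ) ∣ j) (Finset.range (Lrel n m))).card = m := by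
    have himg : Finset.filter (fun j => (n : ℕ) ∣ j) (Finset.range (Lrel n m)) =
        (Finset.range m).image (fun i => i * n) := by
      ext j
      simp only [Finset.mem_filter, Finset.mem_range, Finset.mem_image]
      constructor
      · rintro ⟨hjL, c, rfl⟩
        refine ⟨c, ?_, Nat.mul_comm c n⟩
        by_contra hcm
        push_neg at hcm
        have h1 : n * m ≤ n * c := Nat.mul_le_mul_left n hcm
        have h2 : n * m = n * (m - 1) + n := by
          calc n * m = n * ((m - 1) + 1) := by rw [show (m - 1) + 1 = m from by omega]
          _ = n * (m - 1) + n := by ring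
        rw [Lrel] at hjL
        omega
      · rintro ⟨i, him, rfl⟩
        refine ⟨?_, ⟨i, Nat.mul_comm i n⟩⟩
        have h1 : i * n ≤ (m - 1) * n := Nat.mul_le_mul_right n (by omega)
        have h2 : (m - 1) * n = n * (m - 1) := Nat.mul_comm _ _
        rw [Lrel]
        omega
    rw [himg, Finset.card_image_of_injective _ (fun x y h => by
      have : 0 < n := by omega
      exact Nat.eq_of_mul_eq_mul_right this h), Finset.card_range]
  rw [hcard]
  simp [← Nat.cast_smul_eq_nsmul k]

end Crown3
section Assembly
open Finsupp
variable {n m : ℕ} {k : Type*} [Field k]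

lemma pQ_inj (hn : 1 < n) (q q' : ℕ) (hq : 0 < q) (hq' : 0 < q') (a a' : ZMod n)
    (h : pQ n q a = pQ n q' a') : q = q' ∧ a = a' := by
  rw [pQ, pQ, Prod.mk.injEq] at h
  obtain ⟨h1, h2⟩ := h
  have hlen := congrArg List.length h2
  rw [length_P, length_P] at hlen
  have h3 : q * n = q' * n := by
    have e1 : 0 < q * n := by positivity
    have e2 : 0 < q' * n := by positivity
    omega
  exact ⟨Nat.eq_of_mul_eq_mul_right (by omega) h3, h1⟩

/-- generators of the kernel `K`. -/
noncomputable def genK (n m : ℕ) (k : Type*) [Field k] [NeZero n] (i : Fin m) :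
    (ZMod n × List (ZMod n)) →₀ k :=
  if (i : ℕ) + 1 < m then ∑ a : ZMod n, Finsupp.single (pQ n ((i : ℕ) + 1) a) (1 : k)
  else Finsupp.single (pQ n m 0) 1

/-- evaluation points. -/
def ptK (n m : ℕ) (i : Fin m) : ZMod n × List (ZMod n) :=
  if (i : ℕ) + 1 < m then pQ n ((i : ℕ) + 1) 0 else pQ n m 0

lemma genK_apply [NeZero n] (hn : 1 < n) (hm : 1 < m) (i j : Fin m) :
    (genK n m k j) (ptK n m i) = if i = j then 1 else 0 := by
  have hij : (i = j) ↔ ((i : ℕ) = (j : ℕ)) := by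
    constructor
    · rintro rfl; rfl
    · intro h; exact Fin.ext h
  rw [genK, ptK]
  by_cases hjm : (j : ℕ) + 1 < m <;> by_cases him : (i : ℕ) + 1 < m
  · rw [if_pos hjm, if_pos him, Finsupp.finset_sum_apply]
    by_cases hij' : i = j
    · subst hij'
      rw [if_pos rfl]
      rw [Finset.sum_congr rfl (fun a _ => Finsupp.single_apply)]
      have : ∀ a : ZMod n, (pQ n ((i:ℕ)+1) a = pQ n ((i:ℕ)+1) 0) ↔ (a = 0) := by
        intro a
        constructor
        · intro h; exact (pQ_inj hn _ _ (by omega) (by omega) _ _ h).2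
        · rintro rfl; rfl
      rw [Finset.sum_congr rfl (fun a _ => by rw [if_congr (this a) rfl rfl])]
      rw [Finset.sum_ite_eq' Finset.univ (0 : ZMod n) (fun _ => (1:k))]
      rw [if_pos (Finset.mem_univ _)]
    · rw [if_neg hij']
      apply Finset.sum_eq_zero
      intro a _
      rw [Finsupp.single_apply, if_neg]
      intro hc
      exact hij' (Fin.ext ((by omega : (j:ℕ) + 1 = (i:ℕ) + 1 → (i:ℕ) = (j:ℕ))
        (pQ_inj hn _ _ (by omega) (by omega) _ _ hc).1))
  · rw [if_pos hjm, if_neg him, Finsupp.finset_sum_apply, if_neg]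
    · apply Finset.sum_eq_zero
      intro a _
      rw [Finsupp.single_apply, if_neg]
      intro hc
      have := (pQ_inj hn _ _ (by omega) (by omega) _ _ hc).1
      omega
    · intro hc; subst hc; exact him hjm
  · rw [if_neg hjm, if_pos him, Finsupp.single_apply, if_neg, if_neg]
    · intro hc; subst hc; exact hjm him
    · intro hc
      have := (pQ_inj hn _ _ (by omega) (by omega) _ _ hc).1
      omega
  · rw [if_neg hjm, if_neg him, Finsupp.single_apply, if_pos rfl, if_pos]
    exact Fin.ext (by omega)

lemma genK_pairOK [NeZero n] (hn : 1 < n) (hm : 1 < m) (i : Fin m) :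
    ↑(genK n m k i).support ⊆ {p | PairOK sQ tQ (Zn n m) p} := by
  rw [genK]
  by_cases him : (i : ℕ) + 1 < m
  · rw [if_pos him]
    intro p hp
    have h1 := Finsupp.support_finset_sum (s := Finset.univ)
      (f := fun a : ZMod n => Finsupp.single (pQ n ((i:ℕ)+1) a) (1:k)) hp
    rw [Finset.mem_biUnion] at h1
    obtain ⟨a, -, ha⟩ := h1
    have h2 := Finsupp.support_single_subset ha
    rw [Finset.mem_singleton] at h2
    subst h2
    rw [Set.mem_setOf_eq, pairOK_iff hn hm]
    exact ⟨(i:ℕ)+1, by omega, Or.inl (by omega), rfl⟩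
  · rw [if_neg him]
    intro p hp
    have h2 := Finsupp.support_single_subset hp
    rw [Finset.mem_singleton] at h2
    subst h2
    rw [Set.mem_setOf_eq, pairOK_iff hn hm]
    exact ⟨m, by omega, Or.inr ⟨rfl, rfl⟩, rfl⟩

end Assembly
section Assembly2
open Finsupp Module Submodule LinearMap
variable {n m : ℕ} {k : Type*} [Field k]

lemma d0lin_single
    (d0lin : ((ZMod n × List (ZMod n)) →₀ k) →ₗ[k] (List (ZMod n) →₀ k))
    (hd0 : d0lin = Finsupp.lsum k fun p =>
      LinearMap.toSpanSingleton k _ (d0b sQ tQ (Zn n m) k p))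
    (p : ZMod n × List (ZMod n)) (c : k) :
    d0lin (Finsupp.single p c) = c • d0b sQ tQ (Zn n m) k p := by
  rw [hd0, Finsupp.lsum_single, LinearMap.toSpanSingleton_apply]

lemma d0lin_genK [NeZero n] (hn : 1 < n) (hm : 1 < m)
    (d0lin : ((ZMod n × List (ZMod n)) →₀ k) →ₗ[k] (List (ZMod n) →₀ k))
    (hd0 : d0lin = Finsupp.lsum k fun p =>
      LinearMap.toSpanSingleton k _ (d0b sQ tQ (Zn n m) k p))
    (i : Fin m) : d0lin (genK n m k i) = 0 := by
  rw [genK]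
  by_cases him : (i : ℕ) + 1 < m
  · rw [if_pos him, map_sum]
    rw [Finset.sum_congr rfl (fun a _ => d0lin_single d0lin hd0 _ _)]
    rw [Finset.sum_congr rfl (fun a _ => by
      rw [one_smul, d0b_pq k hn hm ((i:ℕ)+1) (by omega) (by omega) a])]
    rw [Finset.sum_sub_distrib]
    rw [Fintype.sum_equiv (Equiv.addRight (1 : ZMod n))
      (fun a : ZMod n => Finsupp.single (P n (a + 1) (((i:ℕ)+1) * n)) (1:k))
      (fun a : ZMod n => Finsupp.single (P n a (((i:ℕ)+1) * n)) (1:k))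
      (fun a => rfl)]
    exact sub_self _
  · rw [if_neg him, d0lin_single d0lin hd0 _ _, one_smul]
    have hcond : (i : ℕ) + 1 = m := by omega
    rw [d0b_pm k hn hm]

lemma ker_constant [NeZero n] (hn : 1 < n) (hm : 1 < m)
    (d0lin : ((ZMod n × List (ZMod n)) →₀ k) →ₗ[k] (List (ZMod n) →₀ k))
    (hd0 : d0lin = Finsupp.lsum k fun p =>
      LinearMap.toSpanSingleton k _ (d0b sQ tQ (Zn n m) k p))
    (f : (ZMod n × List (ZMod n)) →₀ k) (hker : d0lin f = 0)
    (q : ℕ) (hq : 0 < q) (hqm : q ≤ m - 1) :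
    ∀ a : ZMod n, f (pQ n q a) = f (pQ n q 0) := by
  have step : ∀ v : ZMod n, f (pQ n q (v - 1)) = f (pQ n q v) := by
    intro v
    have hne : pQ n q (v - 1) ≠ pQ n q v := by
      intro hc
      have h4 := (pQ_inj hn q q hq hq _ _ hc).2
      exact one_ne_zero' hn (by linear_combination -h4)
    have happ : (d0lin f) (P n v (q * n)) = f (pQ n q (v - 1)) - f (pQ n q v) := by
      rw [hd0, Finsupp.lsum_apply, Finsupp.sum_apply]
      rw [Finsupp.sum_congr (g2 := fun p c =>
          (if p = pQ n q (v - 1) then c else 0) - (if p = pQ n q v then c else 0))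
        (fun p _ => by
          rw [LinearMap.toSpanSingleton_apply, Finsupp.smul_apply,
            d0b_apply k hn hm q hq hqm v p, smul_eq_mul]
          by_cases h1 : p = pQ n q (v - 1) <;> by_cases h2 : p = pQ n q v <;>
            simp [h1, h2, hne, hne.symm])]
      rw [Finsupp.sum_sub]
      congr 1
      · rw [Finsupp.sum_ite_eq' f (pQ n q (v - 1)) (fun _ c => c)]
        by_cases h : pQ n q (v - 1) ∈ f.support
        · rw [if_pos h]
        · rw [if_neg h, eq_comm, ← Finsupp.notMem_support_iff]
          exact h
      · rw [Finsupp.sum_ite_eq' f (pQ n q v) (fun _ c => c)]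
        by_cases h : pQ n q v ∈ f.support
        · rw [if_pos h]
        · rw [if_neg h, eq_comm, ← Finsupp.notMem_support_iff]
          exact h
    rw [hker] at happ
    have h0 : (0 : List (ZMod n) →₀ k) (P n v (q * n)) = 0 := rfl
    rw [h0] at happ
    linear_combination -happ
  have hnat : ∀ j : ℕ, f (pQ n q ((j : ℕ) : ZMod n)) = f (pQ n q 0) := by
    intro j
    induction j with
    | zero => norm_num
    | succ j ih =>
      have h1 := step (((j + 1 : ℕ) : ℕ) : ZMod n)
      have h2 : (((j + 1 : ℕ) : ℕ) : ZMod n) - 1 = ((j : ℕ) : ZMod n) := by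
        push_cast; ring
      rw [h2] at h1
      rw [← h1, ih]
  intro a
  have := hnat a.val
  rwa [ZMod.natCast_rightInverse a] at this

end Assembly2
section Main
open Finsupp Module Submodule LinearMap
variable {n m : ℕ} {k : Type*} [Field k]

theorem main_crown (hn : 1 < n) (hm : 1 < m)
    (d0lin : ((ZMod n × List (ZMod n)) →₀ k) →ₗ[k] (List (ZMod n) →₀ k))
    (hd0 : d0lin = Finsupp.lsum k fun p =>
      LinearMap.toSpanSingleton k _ (d0b sQ tQ (Zn n m) k p))
    (d1lin : ((List (ZMod n) × List (ZMod n)) →₀ k) →ₗ[k] ((ZMod n × List (ZMod n)) →₀ k))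
    (hd1 : d1lin = Finsupp.lsum k fun q =>
      LinearMap.toSpanSingleton k _ (d1b sQ tQ (Zn n m) k q.1 q.2))
    (K : Submodule k ((ZMod n × List (ZMod n)) →₀ k))
    (hK : K = Submodule.span k
        ((fun p => Finsupp.single p (1 : k)) '' {p | PairOK sQ tQ (Zn n m) p})
      ⊓ LinearMap.ker d0lin)
    (I : Submodule k ((ZMod n × List (ZMod n)) →₀ k))
    (hI : I = Submodule.map d1lin (Submodule.span k
        ((fun q => Finsupp.single q (1 : k)) '' {q | ZPairOK sQ tQ (Zn n m) q}))) :
    I ≤ K ∧ Module.finrank k K =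
      Module.finrank k I + (if (ringChar k) ∣ m then m else m - 1) := by
  haveI : NeZero n := ⟨by omega⟩
  set v : (ZMod n × List (ZMod n)) →₀ k := (m : k) • Finsupp.single (pQ n m 0) 1 with hv
  -- d1lin on singles
  have d1lin_single : ∀ q : List (ZMod n) × List (ZMod n),
      d1lin (Finsupp.single q 1) = d1b sQ tQ (Zn n m) k q.1 q.2 := by
    intro q
    rw [hd1, Finsupp.lsum_single, LinearMap.toSpanSingleton_apply, one_smul]
  -- Step 1 : I = span {v}
  have hIv : I = Submodule.span k {v} := by
    rw [hI, Submodule.map_span, ← Set.image_comp]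
    have himg : ((⇑d1lin ∘ fun q => Finsupp.single q (1:k)) ''
        {q | ZPairOK sQ tQ (Zn n m) q}) = insert 0 {v} := by
      apply Set.eq_of_subset_of_subset
      · rintro x ⟨q, hq, rfl⟩
        rw [Set.mem_setOf_eq, zPairOK_iff hn hm] at hq
        obtain ⟨c, hc, hcm, rfl⟩ := hq
        simp only [Function.comp_apply]
        rw [d1lin_single]
        rcases Nat.lt_or_ge c 2 with h | h
        · have hc1 : c = 1 := by omega
          subst hc1
          right
          rw [Set.mem_singleton_iff, hv]
          exact d1b_one k hn hm
        · left
          exact d1b_zero k hn hm c h hcm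
      · rintro x (rfl | rfl)
        · refine ⟨(zrel n m, P n 1 (2 * n - 1)), ?_, ?_⟩
          · rw [Set.mem_setOf_eq, zPairOK_iff hn hm]
            exact ⟨2, by omega, by omega, rfl⟩
          · simp only [Function.comp_apply]
            rw [d1lin_single]
            exact d1b_zero k hn hm 2 (by omega) (by omega)
        · refine ⟨(zrel n m, P n 1 (1 * n - 1)), ?_, ?_⟩
          · rw [Set.mem_setOf_eq, zPairOK_iff hn hm]
            exact ⟨1, by omega, by omega, rfl⟩
          · simp only [Function.comp_apply]
            rw [d1lin_single, hv]
            exact d1b_one k hn hm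
    rw [himg, Submodule.span_insert_zero]
  -- generators lie in K
  have hgenK : ∀ i : Fin m, genK n m k i ∈ K := by
    intro i
    rw [hK, Submodule.mem_inf]
    constructor
    · rw [← Finsupp.supported_eq_span_single, Finsupp.mem_supported]
      exact genK_pairOK hn hm i
    · rw [LinearMap.mem_ker]
      exact d0lin_genK hn hm d0lin hd0 i
  have hlast : ¬ ((⟨m - 1, by omega⟩ : Fin m) : ℕ) + 1 < m := by simp; omega
  have hgen_last : genK n m k ⟨m - 1, by omega⟩ = Finsupp.single (pQ n m 0) 1 := by
    rw [genK, if_neg hlast]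
  -- Step 2 : I ≤ K
  have hIK : I ≤ K := by
    rw [hIv, Submodule.span_le, Set.singleton_subset_iff, hv, ← hgen_last]
    exact Submodule.smul_mem K _ (hgenK _)
  refine ⟨hIK, ?_⟩
  -- the evaluation map
  set Emap : ((ZMod n × List (ZMod n)) →₀ k) →ₗ[k] (Fin m → k) :=
    LinearMap.pi (fun i => Finsupp.lapply (ptK n m i)) with hE
  have hEapp : ∀ (f : (ZMod n × List (ZMod n)) →₀ k) (i : Fin m),
      (Emap f) i = f (ptK n m i) := fun f i => rfl
  -- injectivity on K
  have hinj : ∀ f ∈ K, (∀ i : Fin m, f (ptK n m i) = 0) → f = 0 := by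
    intro f hf hvan
    rw [hK, Submodule.mem_inf, ← Finsupp.supported_eq_span_single,
      Finsupp.mem_supported, LinearMap.mem_ker] at hf
    obtain ⟨hsupp, hker⟩ := hf
    ext p
    rw [Finsupp.coe_zero, Pi.zero_apply]
    by_contra hp
    have hmem : p ∈ f.support := by
      rw [Finsupp.mem_support_iff]; exact hp
    have hok := hsupp hmem
    rw [Set.mem_setOf_eq, pairOK_iff hn hm] at hok
    obtain ⟨q, hq, hcond, hpq⟩ := hok
    rcases hcond with hqm | ⟨hqm', ha⟩
    · have h1 : f p = f (pQ n q 0) := by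
        rw [hpq]
        exact ker_constant hn hm d0lin hd0 f hker q hq hqm p.1
      have hi : ((⟨q - 1, by omega⟩ : Fin m) : ℕ) + 1 < m := by simp; omega
      have h2 := hvan ⟨q - 1, by omega⟩
      rw [ptK, if_pos hi] at h2
      have h3 : ((⟨q - 1, by omega⟩ : Fin m) : ℕ) + 1 = q := by simp; omega
      rw [h3] at h2
      exact hp (h1.trans h2)
    · have h2 := hvan ⟨m - 1, by omega⟩
      rw [ptK, if_neg hlast] at h2
      exact hp (by rw [hpq, ha, hqm']; exact h2)
  -- surjectivity onto Fin m → k from K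
  have hsurj : ∀ x : Fin m → k, ∃ f ∈ K, ∀ i, f (ptK n m i) = x i := by
    intro x
    refine ⟨∑ j : Fin m, x j • genK n m k j, ?_, ?_⟩
    · exact Submodule.sum_smul_mem K x (fun j _ => hgenK j)
    · intro i
      rw [Finsupp.finset_sum_apply]
      rw [Finset.sum_congr rfl (fun j _ => by
        rw [Finsupp.smul_apply, genK_apply hn hm i j, smul_eq_mul, mul_ite, mul_one, mul_zero])]
      rw [Finset.sum_ite_eq Finset.univ i x, if_pos (Finset.mem_univ i)]
  -- K ≃ Fin m → k
  have hbij : Function.Bijective (Emap.comp K.subtype) := by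
    constructor
    · intro a b hab
      have hsub : (a : (ZMod n × List (ZMod n)) →₀ k) - (b : (ZMod n × List (ZMod n)) →₀ k) ∈ K :=
        K.sub_mem a.2 b.2
      have hvan : ∀ i, ((a : (ZMod n × List (ZMod n)) →₀ k) -
          (b : (ZMod n × List (ZMod n)) →₀ k)) (ptK n m i) = 0 := by
        intro i
        have h5 : (a : (ZMod n × List (ZMod n)) →₀ k) (ptK n m i) =
            (b : (ZMod n × List (ZMod n)) →₀ k) (ptK n m i) := congrFun hab i
        rw [Finsupp.sub_apply, h5, sub_self]
      have h6 := hinj _ hsub hvan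
      exact Subtype.ext (sub_eq_zero.mp h6)
    · intro x
      obtain ⟨f, hf, hfx⟩ := hsurj x
      exact ⟨⟨f, hf⟩, funext fun i => hfx i⟩
  have hrankK : Module.finrank k K = m := by
    have e := LinearEquiv.ofBijective (Emap.comp K.subtype) hbij
    rw [e.finrank_eq, Module.finrank_fin_fun]
  -- char split
  haveI := ringChar.charP k
  have hchar : ((m : ℕ) : k) = 0 ↔ ringChar k ∣ m := CharP.cast_eq_zero_iff k (ringChar k) m
  by_cases hdvd : ringChar k ∣ m
  · rw [if_pos hdvd, hrankK]
    have hv0 : v = 0 := by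
      rw [hv, hchar.mpr hdvd, zero_smul]
    rw [hIv, hv0, Submodule.span_zero_singleton, finrank_bot]
    omega
  · rw [if_neg hdvd, hrankK]
    have hv0 : v ≠ 0 := by
      rw [hv]
      apply smul_ne_zero
      · intro hc; exact hdvd (hchar.mp hc)
      · intro hc
        have := Finsupp.single_eq_zero.mp hc
        exact one_ne_zero this
    rw [hIv, finrank_span_singleton hv0]
    omega

end Main
section ZsetEq
variable {n m : ℕ}

lemma gamma_eq (hn : 0 < n) :
    (List.range n).map (Nat.cast : ℕ → ZMod n) = P n 0 n := by
  rw [P]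
  apply List.map_congr_left
  intro i _
  rw [zero_add]

lemma flatten_replicate (j : ℕ) :
    (List.replicate j (P n 0 n)).flatten = P n 0 (j * n) := by
  induction j with
  | zero => simp
  | succ j ih =>
    rw [List.replicate_succ, List.flatten_cons, ih]
    rw [show (j + 1) * n = n + j * n from by ring, P_append]
    congr 1
    rw [ZMod.natCast_self, add_zero]

lemma zset_eq (hn : 1 < n) (hm : 1 < m) :
    (List.replicate (m - 1) ((List.range n).map (Nat.cast : ℕ → ZMod n))).flatten
      ++ [(0 : ZMod n)] = zrel n m := by
  rw [gamma_eq (by omega), flatten_replicate, zrel, Lrel]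
  rw [show n * (m - 1) + 1 = (m - 1) * n + 1 from by rw [Nat.mul_comm], P_concat]
  congr 2
  rw [cast_mul_self, add_zero]

end ZsetEq

end CrownHH1

open Monomial in
/-- for the crown of length `n > 1` with the single relation
`Z = {a₀γ^{m-1}}` (`m > 1`), the first Hochschild homology of `A = kQ/⟨Z⟩`
(the homology of Bardzell's complex in degree one, i.e. the quotient of
`k(Q₁ ⊙ B) ∩ ker d₀` by `d₁(k(Z ⊙ B))`) has dimension `m` if `char k = p > 0`
divides `m`, and `m − 1` otherwise. -/
theorem crown_HH1_dim {k : Type*} [Field k] {n m : ℕ} (hn : 1 < n) (hm : 1 < m)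
    (s t : ZMod n → ZMod n) (hs : s = id) (ht : t = fun i => i + 1)
    (γl : List (ZMod n)) (hγl : γl = (List.range n).map (Nat.cast : ℕ → ZMod n))
    (Z : Set (List (ZMod n)))
    (hZ : Z = {(List.replicate (m - 1) γl).flatten ++ [(0 : ZMod n)]})
    (d0lin : ((ZMod n × List (ZMod n)) →₀ k) →ₗ[k] (List (ZMod n) →₀ k))
    (hd0 : d0lin = Finsupp.lsum k fun p => LinearMap.toSpanSingleton k _ (d0b s t Z k p))
    (d1lin : ((List (ZMod n) × List (ZMod n)) →₀ k) →ₗ[k] ((ZMod n × List (ZMod n)) →₀ k))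
    (hd1 : d1lin = Finsupp.lsum k fun q => LinearMap.toSpanSingleton k _ (d1b s t Z k q.1 q.2))
    (K : Submodule k ((ZMod n × List (ZMod n)) →₀ k))
    (hK : K = Submodule.span k ((fun p => Finsupp.single p (1 : k)) '' {p | PairOK s t Z p})
            ⊓ LinearMap.ker d0lin)
    (I : Submodule k ((ZMod n × List (ZMod n)) →₀ k))
    (hI : I = Submodule.map d1lin
            (Submodule.span k ((fun q => Finsupp.single q (1 : k)) '' {q | ZPairOK s t Z q}))) :
    I ≤ K ∧
      Module.finrank k K =
        Module.finrank k I + (if (ringChar k) ∣ m then m else m - 1) := by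
  haveI : NeZero n := ⟨by omega⟩
  subst hγl
  have hZn : Z = CrownHH1.Zn n m := by
    rw [hZ]
    exact congrArg (fun l => ({l} : Set (List (ZMod n)))) (CrownHH1.zset_eq hn hm)
  clear hZ
  subst hZn
  have hs' : s = CrownHH1.sQ := hs
  have ht' : t = CrownHH1.tQ := ht
  clear hs ht
  subst hs'
  subst ht'
  exact CrownHH1.main_crown hn hm d0lin hd0 d1lin hd1 K hK I hI
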